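/- A locally finite extended metric space X which is not amenable admits a paradoxical decomposition. -/

import Mathlib

open Set

/-- An extended metric space is locally finite if every set of finite diameter
(every closed ball of finite radius) is finite. -/
def LocallyFiniteEMS (X : Type*) [EMetricSpace X] : Prop :=
  ∀ (x : X) (R : ℝ), {y : X | edist x y ≤ ENNReal.ofReal R}.Finite

/-- The `R`-boundary of a set `F` in an extended metric space. -/
def rBoundary {X : Type*} [EMetricSpace X] (R : ℝ) (F : Set X) : Set X :=
  {x : X | (∃ y ∈ F, edist x y ≤ ENNReal.ofReal R) ∧
           (∃ y ∉ F, edist x y ≤ ENNReal.ofReal R)}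

/-- `F` is an `(R, ε)`-Følner set: finite, nonempty, with `|∂_R F| ≤ ε·|F|`. -/
def IsFolnerSet {X : Type*} [EMetricSpace X] (R ε : ℝ) (F : Set X) : Prop :=
  F.Finite ∧ F.Nonempty ∧ ((rBoundary R F).ncard : ℝ) ≤ ε * F.ncard

/-- Amenability of an extended metric space. -/
def Amenable (X : Type*) [EMetricSpace X] : Prop :=
  ∀ R > (0:ℝ), ∀ ε > (0:ℝ), ∃ F : Set X, IsFolnerSet R ε F

/-- Proper amenability of an extended metric space. -/
def ProperlyAmenable (X : Type*) [EMetricSpace X] : Prop :=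
  ∀ R > (0:ℝ), ∀ ε > (0:ℝ), ∀ A : Set X, A.Finite →
    ∃ F : Set X, IsFolnerSet R ε F ∧ A ⊆ F

/-- `t` is a partial translation with domain `A` and range `B`: a bijection from `A`
onto `B` whose graph is controlled, i.e. `sup_{x ∈ A} d(x, t x) < ∞`. -/
def IsPartialTranslation {X : Type*} [EMetricSpace X] (A B : Set X) (t : X → X) : Prop :=
  Set.BijOn t A B ∧ ∃ C : ℝ, ∀ x ∈ A, edist x (t x) ≤ ENNReal.ofReal C

/-- A paradoxical decomposition of `X`: a partition `X = X₊ ⊔ X₋` together with partial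
translations `t₊ : X → X₊`, `t₋ : X → X₋` defined on all of `X`. -/
def Paradoxical (X : Type*) [EMetricSpace X] : Prop :=
  ∃ (Xp Xm : Set X) (tp tm : X → X),
    Xp ∪ Xm = Set.univ ∧ Disjoint Xp Xm ∧
    IsPartialTranslation Set.univ Xp tp ∧ IsPartialTranslation Set.univ Xm tm

section CSB

/-- Cantor–Schröder–Bernstein with graph control. -/
theorem csb_graph {α β : Type*} (f : α → β) (g : β → α)
    (hf : Function.Injective f) (hg : Function.Injective g) :
    ∃ h : α → β, Function.Bijective h ∧ ∀ a, h a = f a ∨ g (h a) = a := by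
  classical
  rcases isEmpty_or_nonempty β with hβ | hβ
  · haveI : IsEmpty α := ⟨fun a => IsEmpty.false (f a)⟩
    exact ⟨f, ⟨hf, fun b => isEmptyElim b⟩, fun a => Or.inl rfl⟩
  · set Φ : Set α →o Set α :=
      ⟨fun S => (g '' (f '' S)ᶜ)ᶜ, by
        intro S T hST
        exact compl_subset_compl.2 (Set.image_mono (compl_subset_compl.2 (Set.image_mono hST)))⟩
    set S : Set α := OrderHom.lfp Φ with hSdef
    have hfix : (g '' (f '' S)ᶜ)ᶜ = S := OrderHom.map_lfp Φ
    have hcompl : Sᶜ = g '' (f '' S)ᶜ := by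
      conv_lhs => rw [← hfix]
      rw [compl_compl]
    set h : α → β := fun a => if a ∈ S then f a else Function.invFun g a with hh
    have hin : ∀ a ∈ S, h a = f a := fun a ha => by simp [hh, ha]
    have key : ∀ a ∉ S, h a ∉ f '' S ∧ g (h a) = a := by
      intro a ha
      have : a ∈ g '' (f '' S)ᶜ := hcompl ▸ ha
      obtain ⟨b, hb1, hb2⟩ := this
      have hge : g (Function.invFun g a) = a := Function.invFun_eq ⟨b, hb2⟩
      have hbe : Function.invFun g a = b := hg (by rw [hge, hb2])
      have hab : h a = b := by simp [hh, ha, hbe]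
      exact ⟨hab ▸ hb1, by rw [hab, hb2]⟩
    have hinj : Function.Injective h := by
      intro a1 a2 he
      by_cases h1 : a1 ∈ S <;> by_cases h2 : a2 ∈ S
      · apply hf; rwa [hin a1 h1, hin a2 h2] at he
      · exact absurd (he ▸ (hin a1 h1 ▸ Set.mem_image_of_mem f h1 : h a1 ∈ f '' S))
          ((key a2 h2).1)
      · exact absurd (he.symm ▸ (hin a2 h2 ▸ Set.mem_image_of_mem f h2 : h a2 ∈ f '' S))
          ((key a1 h1).1)
      · have := (key a1 h1).2
        rw [he, (key a2 h2).2] at this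
        exact this.symm
    have hsurj : Function.Surjective h := by
      intro b
      by_cases hb : b ∈ f '' S
      · obtain ⟨a, ha, rfl⟩ := hb
        exact ⟨a, hin a ha⟩
      · have hgb : g b ∉ S := by
          rw [← hfix]
          simp only [mem_compl_iff, not_not]
          exact ⟨b, hb, rfl⟩
        exact ⟨g b, hg (key (g b) hgb).2⟩
    refine ⟨h, ⟨hinj, hsurj⟩, fun a => ?_⟩
    by_cases ha : a ∈ S
    · exact Or.inl (hin a ha)
    · exact Or.inr (key a ha).2

end CSB

section Nbhd

variable {X : Type*} [EMetricSpace X]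

/-- The closed `R`-neighbourhood of a set. -/
def nbhd (R : ℝ) (F : Set X) : Set X := {y | ∃ x ∈ F, edist y x ≤ ENNReal.ofReal R}

theorem subset_nbhd (R : ℝ) (F : Set X) : F ⊆ nbhd R F :=
  fun x hx => ⟨x, hx, by simp⟩

theorem nbhd_mono (R : ℝ) {F G : Set X} (h : F ⊆ G) : nbhd R F ⊆ nbhd R G :=
  fun y ⟨x, hx, hd⟩ => ⟨x, h hx, hd⟩

theorem nbhd_finite (hlf : LocallyFiniteEMS X) (R : ℝ) {F : Set X} (hF : F.Finite) :
    (nbhd R F).Finite := by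
  have hsub : nbhd R F ⊆ ⋃ x ∈ F, {y | edist x y ≤ ENNReal.ofReal R} := by
    rintro y ⟨x, hx, hd⟩
    exact Set.mem_biUnion hx (by rwa [edist_comm] at hd)
  exact Set.Finite.subset (hF.biUnion (fun x _ => hlf x R)) hsub

theorem nbhd_nbhd {R S : ℝ} (hR : 0 ≤ R) (hS : 0 ≤ S) (F : Set X) :
    nbhd R (nbhd S F) ⊆ nbhd (R + S) F := by
  rintro y ⟨z, ⟨x, hx, hzx⟩, hyz⟩
  refine ⟨x, hx, ?_⟩
  calc edist y x ≤ edist y z + edist z x := edist_triangle _ _ _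
    _ ≤ ENNReal.ofReal R + ENNReal.ofReal S := add_le_add hyz hzx
    _ = ENNReal.ofReal (R + S) := (ENNReal.ofReal_add hR hS).symm

theorem nbhd_iterate {R : ℝ} (hR : 0 ≤ R) (F : Set X) (n : ℕ) :
    (nbhd R)^[n] F ⊆ nbhd (n * R) F := by
  induction n with
  | zero => simpa using subset_nbhd 0 F
  | succ n ih =>
    rw [Function.iterate_succ_apply']
    calc nbhd R ((nbhd R)^[n] F) ⊆ nbhd R (nbhd (n * R) F) := nbhd_mono _ ih
      _ ⊆ nbhd (R + n * R) F := nbhd_nbhd hR (by positivity) F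
      _ = nbhd ((n + 1 : ℕ) * R) F := by push_cast; ring_nf

theorem rBoundary_subset (R : ℝ) (H : Set X) :
    rBoundary R (nbhd R H) ⊆ nbhd R (nbhd R H) \ H := by
  rintro x ⟨⟨y, hy, hxy⟩, ⟨z, hz, hxz⟩⟩
  constructor
  · exact ⟨y, hy, hxy⟩
  · intro hxH
    exact hz ⟨x, hxH, by rwa [edist_comm] at hxz⟩

theorem bd_card (hlf : LocallyFiniteEMS X) (R : ℝ) {H : Set X} (hH : H.Finite) :
    (rBoundary R (nbhd R H)).ncard + H.ncard ≤ (nbhd R (nbhd R H)).ncard := by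
  have hN2 : (nbhd R (nbhd R H)).Finite := nbhd_finite hlf R (nbhd_finite hlf R hH)
  have hsub := rBoundary_subset (X := X) R H
  have hdisj : Disjoint (rBoundary R (nbhd R H)) H :=
    Set.disjoint_left.2 fun x hx => (hsub hx).2
  have hbfin : (rBoundary R (nbhd R H)).Finite := hN2.subset (fun x hx => (hsub hx).1)
  rw [← Set.ncard_union_eq hdisj hbfin hH]
  apply Set.ncard_le_ncard _ hN2
  rintro x (hx | hx)
  · exact (hsub hx).1
  · exact subset_nbhd _ _ ((subset_nbhd R H) hx)

end Nbhd

section Doubling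

variable {X : Type*} [EMetricSpace X]

theorem doubling (hlf : LocallyFiniteEMS X) {R ε : ℝ} (hR : 0 < R) (hε : 0 < ε)
    (hfol : ∀ F : Set X, ¬ IsFolnerSet R ε F) (m : ℕ) (hm : 1 ≤ (m : ℝ) * ε)
    {F : Set X} (hF : F.Finite) :
    2 * F.ncard ≤ (nbhd ((2 * m : ℕ) * R) F).ncard := by
  by_contra hcon
  push_neg at hcon
  rcases F.eq_empty_or_nonempty with rfl | hne
  · simp at hcon
  set G : ℕ → Set X := fun j => (nbhd R)^[j] F with hG
  have hGsucc : ∀ j, G (j + 1) = nbhd R (G j) := fun j => Function.iterate_succ_apply' _ _ _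
  have hGfin : ∀ j, (G j).Finite := by
    intro j
    induction j with
    | zero => exact hF
    | succ j ih => rw [hGsucc]; exact nbhd_finite hlf R ih
  have hFsub : ∀ j, F ⊆ G j := by
    intro j
    induction j with
    | zero => exact subset_rfl
    | succ j ih => rw [hGsucc]; exact ih.trans (subset_nbhd R _)
  have hGne : ∀ j, (G j).Nonempty := fun j => hne.mono (hFsub j)
  have hstep : ∀ i : ℕ, ((G (2 * i)).ncard : ℝ) + ε * F.ncard ≤ (G (2 * i + 2)).ncard := by
    intro i
    have h1 : G (2 * i + 1) = nbhd R (G (2 * i)) := hGsucc _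
    have hb := bd_card hlf R (hGfin (2 * i))
    rw [← h1, ← hGsucc (2 * i + 1)] at hb
    have hnf := hfol (G (2 * i + 1))
    simp only [IsFolnerSet, not_and] at hnf
    have hlt : ε * ((G (2 * i + 1)).ncard : ℝ) < (rBoundary R (G (2 * i + 1))).ncard := by
      by_contra hle
      push_neg at hle
      exact hnf (hGfin _) (hGne _) hle
    have hmono : (F.ncard : ℝ) ≤ (G (2 * i + 1)).ncard := by
      exact_mod_cast Set.ncard_le_ncard (hFsub _) (hGfin _)
    have hεm : ε * (F.ncard : ℝ) ≤ ε * (G (2 * i + 1)).ncard :=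
      mul_le_mul_of_nonneg_left hmono hε.le
    have hbR : ((rBoundary R (G (2 * i + 1))).ncard : ℝ) + (G (2 * i)).ncard
        ≤ (G (2 * i + 2)).ncard := by exact_mod_cast hb
    linarith
  have hchain : ∀ i : ℕ, (F.ncard : ℝ) + i * (ε * F.ncard) ≤ (G (2 * i)).ncard := by
    intro i
    induction i with
    | zero => simp [hG]
    | succ i ih =>
      have hs := hstep i
      have h2 : 2 * (i + 1) = 2 * i + 2 := by ring
      rw [h2]
      push_cast
      linarith
  have hfinal := hchain m
  have hsub2m : G (2 * m) ⊆ nbhd ((2 * m : ℕ) * R) F := nbhd_iterate hR.le F (2 * m)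
  have hNfin : (nbhd ((2 * m : ℕ) * R) F).Finite := nbhd_finite hlf _ hF
  have hle2 : ((G (2 * m)).ncard : ℝ) ≤ (nbhd ((2 * m : ℕ) * R) F).ncard := by
    exact_mod_cast Set.ncard_le_ncard hsub2m hNfin
  have hconR : ((nbhd ((2 * m : ℕ) * R) F).ncard : ℝ) < 2 * F.ncard := by
    exact_mod_cast hcon
  have hFpos : (0 : ℝ) ≤ (F.ncard : ℝ) := by positivity
  have : (F.ncard : ℝ) ≤ (m : ℝ) * ε * F.ncard := by
    nlinarith
  nlinarith

end Doubling

theorem stmt2 {X : Type*} [EMetricSpace X] (hlf : LocallyFiniteEMS X)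
    (hna : ¬ Amenable X) : Paradoxical X := by
  classical
  rw [Amenable] at hna
  push_neg at hna
  obtain ⟨R, hR, ε, hε, hfol'⟩ := hna
  -- choose m with 1 ≤ m ε
  set m : ℕ := ⌈ε⁻¹⌉₊ with hmdef
  have hm : 1 ≤ (m : ℝ) * ε := by
    have h1 : ε⁻¹ ≤ (m : ℝ) := Nat.le_ceil _
    calc (1 : ℝ) = ε⁻¹ * ε := (inv_mul_cancel₀ hε.ne').symm
      _ ≤ (m : ℝ) * ε := mul_le_mul_of_nonneg_right h1 hε.le
  set R' : ℝ := ((2 * m : ℕ) : ℝ) * R with hR'def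
  have hdbl : ∀ F : Set X, F.Finite → 2 * F.ncard ≤ (nbhd R' F).ncard :=
    fun F hF => doubling hlf hR hε hfol' m hm hF
  have hball : ∀ x : X, {y : X | edist y x ≤ ENNReal.ofReal R'}.Finite := by
    intro x
    apply (hlf x R').subset
    intro y hy
    rw [Set.mem_setOf_eq, edist_comm]
    exact hy
  set t : X ⊕ X → Finset X := fun i => (hball (Sum.elim id id i)).toFinset with htdef
  have hall : ∀ s : Finset (X ⊕ X), s.card ≤ (s.biUnion t).card := by
    intro s
    set F : Finset X := s.image (Sum.elim id id) with hFdef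
    have hsub : s ⊆ F.image Sum.inl ∪ F.image Sum.inr := by
      intro i hi
      have hx : Sum.elim id id i ∈ F := Finset.mem_image_of_mem _ hi
      cases i with
      | inl x =>
        simp only [Sum.elim_inl, id_eq] at hx
        exact Finset.mem_union_left _ (Finset.mem_image_of_mem _ hx)
      | inr x =>
        simp only [Sum.elim_inr, id_eq] at hx
        exact Finset.mem_union_right _ (Finset.mem_image_of_mem _ hx)
    have h1 : s.card ≤ 2 * F.card := by
      calc s.card ≤ (F.image Sum.inl ∪ F.image Sum.inr).card := Finset.card_le_card hsub
        _ ≤ (F.image Sum.inl).card + (F.image Sum.inr).card := Finset.card_union_le _ _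
        _ ≤ F.card + F.card := add_le_add Finset.card_image_le Finset.card_image_le
        _ = 2 * F.card := (two_mul _).symm
    have hset : (↑(s.biUnion t) : Set X) = nbhd R' ↑F := by
      ext y
      simp only [Finset.coe_biUnion, Set.mem_iUnion, Finset.mem_coe,
        Set.Finite.mem_toFinset]
      constructor
      · rintro ⟨i, hi, hy⟩
        simp only [htdef, Set.Finite.mem_toFinset] at hy
        exact ⟨Sum.elim id id i, Finset.mem_image_of_mem _ hi, hy⟩
      · rintro ⟨x, hx, hy⟩
        obtain ⟨i, hi, rfl⟩ := Finset.mem_image.1 hx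
        refine ⟨i, hi, ?_⟩
        simp only [htdef, Set.Finite.mem_toFinset]
        exact hy
    have h2 : 2 * F.card ≤ (s.biUnion t).card := by
      have := hdbl ↑F F.finite_toSet
      rwa [Set.ncard_coe_finset, ← hset, Set.ncard_coe_finset] at this
    exact h1.trans h2
  obtain ⟨f, hfinj, hft⟩ := (Finset.all_card_le_biUnion_card_iff_exists_injective t).1 hall
  have hfd : ∀ i : X ⊕ X, edist (Sum.elim id id i) (f i) ≤ ENNReal.ofReal R' := by
    intro i
    have := hft i
    rw [htdef, Set.Finite.mem_toFinset] at this
    rwa [edist_comm]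
  obtain ⟨h, hbij, hgraph⟩ := csb_graph f Sum.inl hfinj Sum.inl_injective
  set tp : X → X := fun x => h (Sum.inl x) with htp
  set tm : X → X := fun x => h (Sum.inr x) with htm
  refine ⟨tp '' Set.univ, tm '' Set.univ, tp, tm, ?_, ?_, ?_, ?_⟩
  · apply Set.eq_univ_of_forall
    intro x
    obtain ⟨i, hi⟩ := hbij.2 x
    cases i with
    | inl a => exact Or.inl ⟨a, Set.mem_univ a, hi⟩
    | inr a => exact Or.inr ⟨a, Set.mem_univ a, hi⟩
  · rw [Set.disjoint_left]
    rintro x ⟨a, -, ha⟩ ⟨b, -, hb⟩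
    exact Sum.inl_ne_inr (hbij.1 (ha.trans hb.symm))
  · refine ⟨?_, R', ?_⟩
    · exact Set.InjOn.bijOn_image (fun a _ b _ e => Sum.inl_injective (hbij.1 e))
    · intro x _
      rcases hgraph (Sum.inl x) with hc | hc
      · have := hfd (Sum.inl x)
        simp only [Sum.elim_inl, id_eq] at this
        rw [htp]
        simpa [hc] using this
      · have hx : tp x = x := Sum.inl_injective hc
        rw [hx]
        simp
  · refine ⟨?_, R', ?_⟩
    · exact Set.InjOn.bijOn_image (fun a _ b _ e => Sum.inr_injective (hbij.1 e))
    · intro x _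
      rcases hgraph (Sum.inr x) with hc | hc
      · have := hfd (Sum.inr x)
        simp only [Sum.elim_inr, id_eq] at this
        rw [htm]
        simpa [hc] using this
      · exact absurd hc (Sum.inl_ne_inr)
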